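/- Let A ⊆ ℝ^m and B ⊆ ℝ^m be nonempty closed convex sets with A ⊆ B, let δ ∈ (0,1) with d_tH(hom A, hom B) ≤ δ, and let y ∈ bd A with ‖y‖ < √(1/δ² − 1). Then there exists n ∈ bd B such that d((n,1)/‖(n,1)‖, cone{(y,1)}) ≤ δ. -/

import Mathlib

open Metric Set
open RealInnerProductSpace Filter Topology

noncomputable section

/-- `ℝ^m` as a Euclidean space. -/
abbrev Em (m : ℕ) := EuclideanSpace ℝ (Fin m)

/-- `ℝ^(m+1)` realized as the L²-product `ℝ^m × ℝ`. -/
abbrev Em1 (m : ℕ) := WithLp 2 (Em m × ℝ)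

/-- The conic hull: all finite nonnegative combinations of elements of `M`. -/
def coneHull {V : Type*} [AddCommMonoid V] [Module ℝ V] (M : Set V) : Set V :=
  {x | ∃ (k : ℕ) (c : Fin k → ℝ) (v : Fin k → V),
    (∀ i, 0 ≤ c i) ∧ (∀ i, v i ∈ M) ∧ x = ∑ i, c i • v i}

/-- The ray `cone {v} = {λ • v : λ ≥ 0}`. -/
def ray {V : Type*} [AddCommMonoid V] [Module ℝ V] (v : V) : Set V :=
  {x | ∃ l : ℝ, 0 ≤ l ∧ x = l • v}

/-- The vector `(y, 1) ∈ ℝ^(m+1)` obtained by appending a last coordinate `1` to `y`. -/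
def lift1 {m : ℕ} (y : Em m) : Em1 m := (WithLp.equiv 2 (Em m × ℝ)).symm (y, 1)

/-- The homogenization `hom Z = cl (cone (Z × {1}))` of a set `Z ⊆ ℝ^m`. -/
def homog {m : ℕ} (Z : Set (Em m)) : Set (Em1 m) := closure (coneHull (lift1 '' Z))

/-- The truncated Hausdorff distance `d_tH(K₁, K₂) = d_H(K₁ ∩ 𝔹, K₂ ∩ 𝔹)`. -/
def dtH {V : Type*} [NormedAddCommGroup V] (K₁ K₂ : Set V) : ℝ :=
  hausdorffDist (K₁ ∩ closedBall 0 1) (K₂ ∩ closedBall 0 1)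

lemma mem_coneHull' {V : Type*} [AddCommMonoid V] [Module ℝ V] {M : Set V} {x : V}
    (hx : x ∈ M) : x ∈ coneHull M :=
  ⟨1, fun _ => 1, fun _ => x, fun _ => zero_le_one, fun _ => hx, by simp⟩

lemma coneHull_smul {V : Type*} [AddCommMonoid V] [Module ℝ V] {M : Set V} {x : V}
    (hx : x ∈ coneHull M) {c : ℝ} (hc : 0 ≤ c) : c • x ∈ coneHull M := by
  obtain ⟨k, co, v, h0, hM, rfl⟩ := hx
  exact ⟨k, fun i => c * co i, v, fun i => mul_nonneg hc (h0 i), hM,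
    by rw [Finset.smul_sum]; simp [mul_smul]⟩

lemma homog_smul {m : ℕ} {Z : Set (Em m)} {x : Em1 m} (hx : x ∈ homog Z) {c : ℝ} (hc : 0 ≤ c) :
    c • x ∈ homog Z :=
  map_mem_closure (continuous_const_smul c) hx (fun _ hq => coneHull_smul hq hc)

lemma homog_mono {m : ℕ} {Y Z : Set (Em m)} (h : Y ⊆ Z) : homog Y ⊆ homog Z :=
  closure_mono (fun _ ⟨k, c, v, h0, hM, hx⟩ => ⟨k, c, v, h0, fun i => image_mono h (hM i), hx⟩)

lemma isClosed_homog {m : ℕ} (Z : Set (Em m)) : IsClosed (homog Z) := isClosed_closure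

@[simp] lemma lift1_fst {m : ℕ} (y : Em m) : (lift1 y).fst = y := rfl
@[simp] lemma lift1_snd {m : ℕ} (y : Em m) : (lift1 y).snd = 1 := rfl

lemma lift1_mem_homog {m : ℕ} {Z : Set (Em m)} {y : Em m} (hy : y ∈ Z) : lift1 y ∈ homog Z :=
  subset_closure (mem_coneHull' ⟨y, hy, rfl⟩)

lemma norm_lift1_sq {m : ℕ} (y : Em m) : ‖lift1 y‖ ^ 2 = ‖y‖ ^ 2 + 1 := by
  rw [WithLp.prod_norm_sq_eq_of_L2]; simp

def htL (m : ℕ) : Em1 m →L[ℝ] ℝ :=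
  (ContinuousLinearMap.snd ℝ (Em m) ℝ).comp
    (WithLp.prodContinuousLinearEquiv 2 ℝ (Em m) ℝ).toContinuousLinearMap

@[simp] lemma htL_apply {m : ℕ} (q : Em1 m) : htL m q = q.snd := rfl

def fstL (m : ℕ) : Em1 m →L[ℝ] Em m :=
  (ContinuousLinearMap.fst ℝ (Em m) ℝ).comp
    (WithLp.prodContinuousLinearEquiv 2 ℝ (Em m) ℝ).toContinuousLinearMap

@[simp] lemma fstL_apply {m : ℕ} (q : Em1 m) : fstL m q = q.fst := rfl

lemma coneHull_slice {m : ℕ} {B : Set (Em m)} (hBconv : Convex ℝ B)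
    {q : Em1 m} (hq : q ∈ coneHull (lift1 '' B)) (hpos : 0 < q.snd) :
    (q.snd)⁻¹ • q.fst ∈ B := by
  obtain ⟨k, c, v, h0, hM, rfl⟩ := hq
  choose b hbB hvb using hM
  have hv : v = fun i => lift1 (b i) := funext fun i => (hvb i).symm
  subst hv
  have hsnd : (∑ i, c i • lift1 (b i)).snd = ∑ i, c i := by
    have h1 : (∑ i, c i • lift1 (b i)).snd = htL m (∑ i, c i • lift1 (b i)) := rfl
    rw [h1, map_sum]
    simp
  have hfst : (∑ i, c i • lift1 (b i)).fst = ∑ i, c i • b i := by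
    have h1 : (∑ i, c i • lift1 (b i)).fst = fstL m (∑ i, c i • lift1 (b i)) := rfl
    rw [h1, map_sum]
    simp
  rw [hsnd] at hpos ⊢
  rw [hfst]
  have hsum : ∑ i, (∑ j, c j)⁻¹ * c i = 1 := by
    rw [← Finset.mul_sum]; exact inv_mul_cancel₀ (ne_of_gt hpos)
  have := hBconv.sum_mem (t := Finset.univ) (w := fun i => (∑ j, c j)⁻¹ * c i)
    (fun i _ => mul_nonneg (inv_nonneg.2 (Finset.sum_nonneg fun j _ => h0 j)) (h0 i))
    hsum (fun i _ => hbB i)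
  simpa [Finset.smul_sum, mul_smul] using this

lemma slice_mem {m : ℕ} {B : Set (Em m)} (hBcl : IsClosed B) (hBconv : Convex ℝ B)
    {x : Em m} (hx : lift1 x ∈ homog B) : x ∈ B := by
  rw [homog, mem_closure_iff_clusterPt] at hx
  have hne : (𝓝 (lift1 x) ⊓ 𝓟 (coneHull (lift1 '' B))).NeBot := hx
  set F := 𝓝 (lift1 x) ⊓ 𝓟 (coneHull (lift1 '' B)) with hF
  have hid : Tendsto id F (𝓝 (lift1 x)) := tendsto_id.mono_left inf_le_left
  have hsnd : Tendsto (fun q : Em1 m => q.snd) F (𝓝 1) := by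
    have := ((htL m).continuous.tendsto (lift1 x)).comp hid
    exact this
  have hfst : Tendsto (fun q : Em1 m => q.fst) F (𝓝 x) := by
    have := ((fstL m).continuous.tendsto (lift1 x)).comp hid
    exact this
  have hg : Tendsto (fun q : Em1 m => (q.snd)⁻¹ • q.fst) F (𝓝 x) := by
    have := (hsnd.inv₀ one_ne_zero).smul hfst
    simpa using this
  have hev : ∀ᶠ q in F, (q.snd)⁻¹ • q.fst ∈ B := by
    have h1 : ∀ᶠ q in F, q ∈ coneHull (lift1 '' B) :=
      (Filter.eventually_principal.mpr (fun q h => h)).filter_mono inf_le_right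
    filter_upwards [h1, hsnd.eventually (eventually_gt_nhds one_pos)] with q hq1 hq2
    exact coneHull_slice hBconv hq1 hq2
  have := mem_closure_of_tendsto hg hev
  rwa [hBcl.closure_eq] at this

lemma exists_support {m : ℕ} {A : Set (Em m)} (hAne : A.Nonempty) (hAcl : IsClosed A)
    (hAconv : Convex ℝ A) {y : Em m} (hy : y ∈ frontier A) :
    ∃ s : Em m, ‖s‖ = 1 ∧ ∀ x ∈ A, ⟪s, x⟫ ≤ ⟪s, y⟫ := by
  have hynotint : y ∉ interior A := hy.2
  have main : ∃ s : Em m, s ≠ 0 ∧ ∀ x ∈ A, ⟪s, x⟫ ≤ ⟪s, y⟫ := by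
    by_cases hint : (interior A).Nonempty
    · obtain ⟨f, hf⟩ := geometric_hahn_banach_open_point hAconv.interior isOpen_interior hynotint
      obtain ⟨a₀, ha₀⟩ := hint
      have hfA : ∀ x ∈ A, f x ≤ f y := by
        intro x hxA
        have hseg : ∀ θ : ℝ, θ ∈ Ioc (0:ℝ) 1 → f ((1 - θ) • x + θ • a₀) < f y := by
          intro θ hθ
          exact hf _ (hAconv.combo_closure_interior_mem_interior (subset_closure hxA) ha₀
            (by linarith [hθ.2]) hθ.1 (by ring))
        have hcont : Continuous fun θ : ℝ => f ((1 - θ) • x + θ • a₀) := by fun_prop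
        have ht : Tendsto (fun θ : ℝ => f ((1 - θ) • x + θ • a₀)) (𝓝[>] (0:ℝ)) (𝓝 (f x)) := by
          have h0 := hcont.tendsto 0
          have := h0.mono_left (nhdsWithin_le_nhds (s := Ioi (0:ℝ)))
          simpa using this
        refine le_of_tendsto ht ?_
        filter_upwards [Ioc_mem_nhdsGT_of_mem (by constructor <;> norm_num : (0:ℝ) ∈ Ico (0:ℝ) 1)]
          with θ hθ
        exact (hseg θ hθ).le
      refine ⟨(InnerProductSpace.toDual ℝ (Em m)).symm f, ?_, ?_⟩
      · intro h
        have : f = 0 := by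
          have := congrArg (InnerProductSpace.toDual ℝ (Em m)) h
          simpa using this
        rw [this] at hf
        exact absurd (hf a₀ ha₀) (by simp)
      · intro x hx
        rw [InnerProductSpace.toDual_symm_apply, InnerProductSpace.toDual_symm_apply]
        exact hfA x hx
    · have hspan : affineSpan ℝ A ≠ ⊤ := by
        intro h
        rw [← hAconv.interior_nonempty_iff_affineSpan_eq_top] at h
        exact hint h
      have hdir : (affineSpan ℝ A).direction ≠ ⊤ := by
        intro h
        exact hspan ((AffineSubspace.direction_eq_top_iff_of_nonempty
          ((affineSpan_nonempty (k := ℝ) (s := A)).mpr hAne)).mp h)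
      have horth : ((affineSpan ℝ A).direction)ᗮ ≠ ⊥ := by
        rw [Ne, Submodule.orthogonal_eq_bot_iff]
        exact hdir
      obtain ⟨s, hsmem, hs0⟩ := Submodule.exists_mem_ne_zero_of_ne_bot horth
      refine ⟨s, hs0, fun x hx => ?_⟩
      have hxy : x - y ∈ (affineSpan ℝ A).direction := by
        have := AffineSubspace.vsub_mem_direction (subset_affineSpan ℝ A hx)
          (subset_affineSpan ℝ A (hAcl.frontier_subset hy))
        simpa using this
      have : ⟪s, x - y⟫ = 0 := by
        have := (Submodule.mem_orthogonal _ s).mp hsmem _ hxy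
        rwa [real_inner_comm] at this
      rw [inner_sub_right] at this
      linarith
  obtain ⟨s, hs0, hsA⟩ := main
  refine ⟨‖s‖⁻¹ • s, ?_, fun x hx => ?_⟩
  · rw [norm_smul, norm_inv, norm_norm, inv_mul_cancel₀ (norm_ne_zero_iff.mpr hs0)]
  · rw [real_inner_smul_left, real_inner_smul_left]
    exact mul_le_mul_of_nonneg_left (hsA x hx) (inv_nonneg.mpr (norm_nonneg s))


lemma auxV {δ yn V : ℝ} (hδ0 : 0 < δ) (hV2 : V ^ 2 = yn ^ 2 + 1)
    (hyn2 : yn ^ 2 < 1 / δ ^ 2 - 1) (hV : 0 ≤ V) :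
    V ^ 2 * δ ^ 2 < 1 ∧ 0 < V ∧ δ < V⁻¹ := by
  have hδ2 : 0 < δ ^ 2 := by positivity
  have h1 : V ^ 2 * δ ^ 2 < 1 := by
    rw [hV2]
    calc (yn ^ 2 + 1) * δ ^ 2 < (1 / δ ^ 2) * δ ^ 2 := by
          apply mul_lt_mul_of_pos_right _ hδ2; linarith
      _ = 1 := by field_simp
  have hV0 : 0 < V := by nlinarith [sq_nonneg yn]
  have hδV : δ * V < 1 := by nlinarith [mul_nonneg hδ0.le hV0.le]
  refine ⟨h1, hV0, ?_⟩
  have h := mul_lt_mul_of_pos_right hδV (inv_pos.2 hV0)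
  rwa [one_mul, mul_assoc, mul_inv_cancel₀ hV0.ne', mul_one] at h

lemma auxS {δ r t Nt : ℝ} (hδ0 : 0 < δ) (ht0 : 0 ≤ t) (hNt2 : Nt ^ 2 = 1 + t ^ 2)
    (hNt0 : 0 ≤ Nt) (h : t ≤ δ * Nt) (hr2 : r ^ 2 = 1 - δ ^ 2) (hr0 : 0 < r) :
    t ≤ δ / r := by
  have h2 : t ^ 2 ≤ δ ^ 2 * (1 + t ^ 2) := by nlinarith
  rw [le_div_iff₀ hr0]
  nlinarith [mul_nonneg ht0 hr0.le, sq_nonneg (t * r - δ), sq_nonneg (t * r + δ)]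

lemma auxH {δ V N a T yn r : ℝ} (hδ0 : 0 < δ) (hV2 : V ^ 2 = yn ^ 2 + 1) (hV0 : 0 < V)
    (hδVinv : δ < V⁻¹) (hN2 : N ^ 2 = 1 + a ^ 2) (hN0 : 0 < N) (ha : |a| ≤ yn)
    (hV2lt : V ^ 2 * δ ^ 2 < 1) (hr2 : r ^ 2 = 1 - δ ^ 2) (hr0 : 0 < r)
    (hT0 : 0 ≤ T) (hTC : T ≤ δ / r) :
    0 < V⁻¹ + T * (N⁻¹ * (-a)) := by
  have hyn : 0 ≤ yn := le_trans (abs_nonneg a) ha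
  have ha2 : a ^ 2 ≤ yn ^ 2 := by nlinarith [sq_abs a, abs_nonneg a]
  have hstep1 : |a| * V ≤ yn * N := by
    have hsq : (|a| * V) ^ 2 ≤ (yn * N) ^ 2 := by
      rw [mul_pow, mul_pow, sq_abs, hV2, hN2]
      nlinarith
    exact (pow_le_pow_iff_left₀ (by positivity) (by positivity) two_ne_zero).mp hsq
  have hstep2 : yn ≤ r * V := by
    have hsq : yn ^ 2 ≤ (r * V) ^ 2 := by
      rw [mul_pow, hr2, hV2]
      nlinarith
    exact (pow_le_pow_iff_left₀ hyn (by positivity) two_ne_zero).mp hsq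
  have hstep3 : N⁻¹ * |a| ≤ r := by
    have h1 : |a| ≤ r * N := by
      have h2 : |a| * V ≤ (r * N) * V := by
        calc |a| * V ≤ yn * N := hstep1
          _ ≤ (r * V) * N := mul_le_mul_of_nonneg_right hstep2 hN0.le
          _ = (r * N) * V := by ring
      exact le_of_mul_le_mul_right h2 hV0
    calc N⁻¹ * |a| ≤ N⁻¹ * (r * N) := by
          apply mul_le_mul_of_nonneg_left h1 (inv_nonneg.2 hN0.le)
      _ = r := by field_simp
  have hTr : T * (N⁻¹ * |a|) ≤ δ := by
    calc T * (N⁻¹ * |a|) ≤ (δ / r) * r := by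
          apply mul_le_mul hTC hstep3 (by positivity) (by positivity)
      _ = δ := by field_simp
  have h1 : -(T * (N⁻¹ * |a|)) ≤ T * (N⁻¹ * (-a)) := by
    have h2 : -|a| ≤ -a := neg_le_neg (le_abs_self a)
    have h3 : 0 ≤ T * N⁻¹ := mul_nonneg hT0 (inv_nonneg.2 hN0.le)
    nlinarith
  linarith

set_option maxHeartbeats 1000000 in
/-- If `A ⊆ B` are nonempty closed convex sets with `d_tH(hom A, hom B) ≤ δ` for some
`δ ∈ (0,1)`, and `y ∈ bd A` with `‖y‖ < √(1/δ² − 1)`, then there exists `n ∈ bd B` with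
`d((n,1)/‖(n,1)‖, cone{(y,1)}) ≤ δ`. -/
theorem exists_boundary_point_close_to_ray
    {m : ℕ} (A B : Set (Em m)) (hAne : A.Nonempty) (hBne : B.Nonempty)
    (hAcl : IsClosed A) (hBcl : IsClosed B)
    (hAconv : Convex ℝ A) (hBconv : Convex ℝ B) (hAB : A ⊆ B)
    (δ : ℝ) (hδ : δ ∈ Set.Ioo (0:ℝ) 1) (hd : dtH (homog A) (homog B) ≤ δ)
    (y : Em m) (hy : y ∈ frontier A) (hynorm : ‖y‖ < Real.sqrt (1 / δ ^ 2 - 1)) :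
    ∃ nn ∈ frontier B, infDist (‖lift1 nn‖⁻¹ • lift1 nn) (ray (lift1 y)) ≤ δ := by
  obtain ⟨hδ0, hδ1⟩ := hδ
  have hyA : y ∈ A := hAcl.frontier_subset hy
  obtain ⟨s, hs1, hsA⟩ := exists_support hAne hAcl hAconv hy
  set a : ℝ := ⟪s, y⟫ with ha_def
  set ν₀ : Em1 m := (WithLp.equiv 2 (Em m × ℝ)).symm (s, -a) with hν₀def
  have hν₀fst : ν₀.fst = s := rfl
  have hν₀snd : ν₀.snd = -a := rfl
  have hinner₀ : ∀ x : Em m, ⟪ν₀, lift1 x⟫ = ⟪s, x⟫ - a := by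
    intro x
    rw [WithLp.prod_inner_apply]
    simp [hν₀fst, hν₀snd, RCLike.inner_apply, sub_eq_add_neg]
  have hhalf : ∀ q ∈ homog A, ⟪ν₀, q⟫ ≤ 0 := by
    intro q hq
    have hC : coneHull (lift1 '' A) ⊆ {q : Em1 m | ⟪ν₀, q⟫ ≤ 0} := by
      rintro q ⟨k, c, v, h0, hM, rfl⟩
      have hsum : ⟪ν₀, ∑ i, c i • v i⟫ = ∑ i, c i * ⟪ν₀, v i⟫ := by
        rw [inner_sum]
        exact Finset.sum_congr rfl (fun i _ => real_inner_smul_right _ _ _)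
      rw [mem_setOf_eq, hsum]
      refine Finset.sum_nonpos fun i _ => ?_
      obtain ⟨ai, haiA, hai⟩ := hM i
      have hle : ⟪ν₀, v i⟫ ≤ 0 := by
        rw [← hai, hinner₀ ai]
        linarith [hsA ai haiA]
      exact mul_nonpos_of_nonneg_of_nonpos (h0 i) hle
    have hclosed : IsClosed {q : Em1 m | ⟪ν₀, q⟫ ≤ 0} :=
      isClosed_le (Continuous.inner continuous_const continuous_id) continuous_const
    exact closure_minimal hC hclosed hq
  -- scalar setup
  set V : ℝ := ‖lift1 y‖ with hVdef
  have hV2 : V ^ 2 = ‖y‖ ^ 2 + 1 := norm_lift1_sq y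
  have hy2 : ‖y‖ ^ 2 < 1 / δ ^ 2 - 1 := (Real.lt_sqrt (norm_nonneg y)).mp hynorm
  obtain ⟨hV2lt, hV0, hδVinv⟩ := auxV hδ0 hV2 hy2 (norm_nonneg (lift1 y))
  -- the unit normal ν
  have hN₀2 : ‖ν₀‖ ^ 2 = 1 + a ^ 2 := by
    rw [WithLp.prod_norm_sq_eq_of_L2, hν₀fst, hν₀snd, hs1]
    simp [sq_abs, Real.norm_eq_abs]
  set N₀ : ℝ := ‖ν₀‖ with hN₀def
  have hN₀pos : 0 < N₀ := by
    have h1 : 0 ≤ N₀ := norm_nonneg ν₀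
    nlinarith [sq_nonneg a]
  set ν : Em1 m := N₀⁻¹ • ν₀ with hνdef
  have hνnorm : ‖ν‖ = 1 := by
    rw [hνdef, norm_smul, norm_inv, Real.norm_eq_abs, abs_of_pos hN₀pos, ← hN₀def,
      inv_mul_cancel₀ hN₀pos.ne']
  have hν0y : ⟪ν₀, lift1 y⟫ = 0 := by rw [hinner₀]; simp [ha_def]
  have hνy : ⟪ν, lift1 y⟫ = 0 := by rw [hνdef, real_inner_smul_left, hν0y, mul_zero]
  have hνhalf : ∀ p ∈ homog A, ⟪ν, p⟫ ≤ 0 := by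
    intro p hp
    rw [hνdef, real_inner_smul_left]
    exact mul_nonpos_of_nonneg_of_nonpos (inv_nonneg.2 hN₀pos.le) (hhalf p hp)
  have hνsnd : ν.snd = N₀⁻¹ * (-a) := by
    rw [hνdef, WithLp.smul_snd, hν₀snd]; rfl
  -- v̂
  set vh : Em1 m := V⁻¹ • lift1 y with hvhdef
  have hvhnorm : ‖vh‖ = 1 := by
    rw [hvhdef, norm_smul, norm_inv, Real.norm_eq_abs, abs_of_pos hV0, ← hVdef,
      inv_mul_cancel₀ hV0.ne']
  have hvhA : vh ∈ homog A := homog_smul (lift1_mem_homog hyA) (inv_pos.2 hV0).le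
  have hνvh : ⟪ν, vh⟫ = 0 := by rw [hvhdef, real_inner_smul_right, hνy, mul_zero]
  -- the curve z
  set z : ℝ → Em1 m := fun t => vh + t • ν with hzdef
  have hz_cont : Continuous z := continuous_const.add (continuous_id.smul continuous_const)
  have hznorm : ∀ t, ‖z t‖ ^ 2 = 1 + t ^ 2 := by
    intro t
    have h1 : ‖z t‖ ^ 2 = ‖vh‖ ^ 2 + 2 * ⟪vh, t • ν⟫ + ‖t • ν‖ ^ 2 := norm_add_sq_real vh (t • ν)
    rw [h1, hvhnorm, real_inner_smul_right, real_inner_comm, hνvh, norm_smul t ν, hνnorm]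
    simp [sq_abs, Real.norm_eq_abs]
  have hznormval : ∀ t, ‖z t‖ = Real.sqrt (1 + t ^ 2) := by
    intro t
    rw [← Real.sqrt_sq (norm_nonneg (z t)), hznorm t]
  have hinnerz : ∀ t, ⟪ν, z t⟫ = t := by
    intro t
    rw [hzdef]
    show ⟪ν, vh + t • ν⟫ = t
    rw [inner_add_right, hνvh, real_inner_smul_right, real_inner_self_eq_norm_sq, hνnorm]
    ring
  -- the set S
  set S : Set ℝ := Ici (0:ℝ) ∩ z ⁻¹' (homog B) with hSdef
  have hmemS : ∀ t : ℝ, t ∈ S ↔ 0 ≤ t ∧ z t ∈ homog B := fun t => Iff.rfl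
  have h0S : (0:ℝ) ∈ S := by
    rw [hmemS]
    refine ⟨le_refl 0, ?_⟩
    have : z 0 = vh := by rw [hzdef]; simp
    rw [this]
    exact homog_mono hAB hvhA
  have hvhAB : vh ∈ homog A ∩ closedBall 0 1 := ⟨hvhA, by simp [mem_closedBall, hvhnorm]⟩
  have hvhBB : vh ∈ homog B ∩ closedBall 0 1 := ⟨homog_mono hAB hvhA, hvhAB.2⟩
  have hfin : EMetric.hausdorffEdist (homog B ∩ closedBall 0 1) (homog A ∩ closedBall 0 1) ≠ ⊤ :=
    Metric.hausdorffEdist_ne_top_of_nonempty_of_bounded ⟨vh, hvhBB⟩ ⟨vh, hvhAB⟩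
      ((isBounded_closedBall).subset inter_subset_right)
      ((isBounded_closedBall).subset inter_subset_right)
  -- the key bound on S
  have hSbound : ∀ t ∈ S, t ≤ δ * Real.sqrt (1 + t ^ 2) := by
    intro t htS
    obtain ⟨ht0, htB⟩ := (hmemS t).mp htS
    set Nt := Real.sqrt (1 + t ^ 2) with hNtdef
    have hNt0 : 0 < Nt := Real.sqrt_pos.2 (by positivity)
    set u : Em1 m := Nt⁻¹ • z t with hudef
    have hu1 : ‖u‖ = 1 := by
      rw [hudef, norm_smul, norm_inv, Real.norm_eq_abs, abs_of_pos hNt0, hznormval, ← hNtdef,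
        inv_mul_cancel₀ hNt0.ne']
    have huB : u ∈ homog B ∩ closedBall 0 1 :=
      ⟨homog_smul htB (inv_pos.2 hNt0).le, by simp [mem_closedBall, hu1]⟩
    have hinf : infDist u (homog A ∩ closedBall 0 1) ≤ δ := by
      have h1 := infDist_le_hausdorffDist_of_mem huB hfin
      have h2 : hausdorffDist (homog B ∩ closedBall 0 1) (homog A ∩ closedBall 0 1)
          = dtH (homog A) (homog B) := by
        rw [dtH, hausdorffDist_comm]
      rw [h2] at h1
      linarith
    obtain ⟨p, hpmem, hpd⟩ := (((isClosed_homog A).inter Metric.isClosed_closedBall).exists_infDist_eq_dist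
      ⟨vh, hvhAB⟩ u)
    have hcs : ⟪ν, u - p⟫ ≤ ‖u - p‖ := by
      have h3 := real_inner_le_norm ν (u - p)
      rwa [hνnorm, one_mul] at h3
    have hνp : ⟪ν, p⟫ ≤ 0 := hνhalf p hpmem.1
    have hνu : ⟪ν, u⟫ = Nt⁻¹ * t := by rw [hudef, real_inner_smul_right, hinnerz]
    have hinnersub : ⟪ν, u - p⟫ = ⟪ν, u⟫ - ⟪ν, p⟫ := inner_sub_right _ _ _
    have hle : Nt⁻¹ * t ≤ δ := by
      have h4 : ⟪ν, u⟫ ≤ dist u p := by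
        rw [dist_eq_norm]
        linarith
      rw [hνu] at h4
      rw [← hpd] at h4
      linarith
    calc t = Nt * (Nt⁻¹ * t) := by field_simp
      _ ≤ Nt * δ := mul_le_mul_of_nonneg_left hle hNt0.le
      _ = δ * Nt := mul_comm _ _
  -- S is bounded above
  set r : ℝ := Real.sqrt (1 - δ ^ 2) with hrdef
  have hr2 : r ^ 2 = 1 - δ ^ 2 := Real.sq_sqrt (by nlinarith)
  have hr0 : 0 < r := Real.sqrt_pos.2 (by nlinarith)
  have hStoC : ∀ t ∈ S, t ≤ δ / r :=
    fun t htS => auxS hδ0 ((hmemS t).mp htS).1 (Real.sq_sqrt (by positivity))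
      (Real.sqrt_nonneg _) (hSbound t htS) hr2 hr0
  have hbdd : BddAbove S := ⟨δ / r, fun t ht => hStoC t ht⟩
  have hSclosed : IsClosed S := isClosed_Ici.inter ((isClosed_homog B).preimage hz_cont)
  set T := sSup S with hTdef
  have hTS : T ∈ S := hSclosed.csSup_mem ⟨0, h0S⟩ hbdd
  have hT0 : 0 ≤ T := ((hmemS T).mp hTS).1
  have hzTB : z T ∈ homog B := ((hmemS T).mp hTS).2
  have hTnotint : z T ∉ interior (homog B) := by
    intro hint
    have hnh : homog B ∈ 𝓝 (z T) := mem_interior_iff_mem_nhds.mp hint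
    have hpre : z ⁻¹' (homog B) ∈ 𝓝 T := hz_cont.continuousAt.preimage_mem_nhds hnh
    obtain ⟨ε, hε0, hball⟩ := Metric.mem_nhds_iff.mp hpre
    have hmem : T + ε / 2 ∈ S := by
      rw [hmemS]
      refine ⟨by linarith, hball ?_⟩
      rw [mem_ball, Real.dist_eq]
      rw [show T + ε / 2 - T = ε / 2 by ring, abs_of_pos (by linarith)]
      linarith
    have := le_csSup hbdd hmem
    linarith
  -- the height of z T
  set h : ℝ := (z T).snd with hhdef
  have hzsnd : h = V⁻¹ + T * (N₀⁻¹ * (-a)) := by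
    rw [hhdef, hzdef]
    show (vh + T • ν).snd = _
    rw [hvhdef, hνdef]
    show (V⁻¹ • lift1 y + T • (N₀⁻¹ • ν₀)).snd = _
    rw [WithLp.add_snd, WithLp.smul_snd, WithLp.smul_snd, WithLp.smul_snd, lift1_snd, hν₀snd]
    simp [smul_eq_mul]
  have haY : |a| ≤ ‖y‖ := by
    have := abs_real_inner_le_norm s y
    rwa [hs1, one_mul] at this
  have hhpos : 0 < h := by
    rw [hzsnd]
    exact auxH hδ0 hV2 hV0 hδVinv hN₀2 hN₀pos haY hV2lt hr2 hr0 hT0 (hStoC T hTS)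
  -- the boundary point nn
  set nn : Em m := h⁻¹ • (z T).fst with hnndef
  have hlift : lift1 nn = h⁻¹ • z T := by
    have h1 : (h⁻¹ • z T).fst = nn := by rw [WithLp.smul_fst, hnndef]
    have h2 : (h⁻¹ • z T).snd = 1 := by
      rw [WithLp.smul_snd, ← hhdef, smul_eq_mul]
      exact inv_mul_cancel₀ hhpos.ne'
    calc lift1 nn = (WithLp.equiv 2 (Em m × ℝ)).symm (nn, 1) := rfl
      _ = (WithLp.equiv 2 (Em m × ℝ)).symm ((h⁻¹ • z T).fst, (h⁻¹ • z T).snd) := by rw [h1, h2]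
      _ = h⁻¹ • z T := rfl
  have hnnB : nn ∈ B := by
    apply slice_mem hBcl hBconv
    rw [hlift]
    exact homog_smul hzTB (inv_nonneg.2 hhpos.le)
  have hnnNotInt : nn ∉ interior B := by
    intro hint
    apply hTnotint
    rw [mem_interior_iff_mem_nhds]
    have hsndcont : ContinuousAt (fun q : Em1 m => q.snd) (z T) := (htL m).continuous.continuousAt
    have hfstcont : ContinuousAt (fun q : Em1 m => q.fst) (z T) := (fstL m).continuous.continuousAt
    have hFcont : ContinuousAt (fun q : Em1 m => (q.snd)⁻¹ • q.fst) (z T) :=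
      (hsndcont.inv₀ (by rw [← hhdef]; exact hhpos.ne')).smul hfstcont
    have hFval : ((z T).snd)⁻¹ • (z T).fst ∈ interior B := by
      rw [← hhdef, ← hnndef]; exact hint
    have hE1 : (fun q : Em1 m => (q.snd)⁻¹ • q.fst) ⁻¹' (interior B) ∈ 𝓝 (z T) :=
      hFcont.preimage_mem_nhds (isOpen_interior.mem_nhds hFval)
    have hE2 : (fun q : Em1 m => q.snd) ⁻¹' (Ioi (0:ℝ)) ∈ 𝓝 (z T) :=
      hsndcont.preimage_mem_nhds (Ioi_mem_nhds (by rw [← hhdef]; exact hhpos))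
    filter_upwards [hE1, hE2] with q hq1 hq2
    have hq2' : (0:ℝ) < q.snd := hq2
    have hq3 : lift1 ((q.snd)⁻¹ • q.fst) ∈ coneHull (lift1 '' B) :=
      mem_coneHull' ⟨_, interior_subset hq1, rfl⟩
    have hq4 : q.snd • lift1 ((q.snd)⁻¹ • q.fst) = q := by
      have hf1 : (q.snd • lift1 ((q.snd)⁻¹ • q.fst)).fst = q.fst := by
        rw [WithLp.smul_fst, lift1_fst, smul_inv_smul₀ hq2'.ne']
      have hf2 : (q.snd • lift1 ((q.snd)⁻¹ • q.fst)).snd = q.snd := by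
        rw [WithLp.smul_snd, lift1_snd, smul_eq_mul, mul_one]
      calc q.snd • lift1 ((q.snd)⁻¹ • q.fst)
          = (WithLp.equiv 2 (Em m × ℝ)).symm ((q.snd • lift1 ((q.snd)⁻¹ • q.fst)).fst,
            (q.snd • lift1 ((q.snd)⁻¹ • q.fst)).snd) := rfl
        _ = (WithLp.equiv 2 (Em m × ℝ)).symm (q.fst, q.snd) := by rw [hf1, hf2]
        _ = q := rfl
    exact subset_closure (hq4 ▸ coneHull_smul hq3 hq2'.le)
  have hnnFront : nn ∈ frontier B := by
    rw [frontier, hBcl.closure_eq]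
    exact ⟨hnnB, hnnNotInt⟩
  refine ⟨nn, hnnFront, ?_⟩
  set NT := Real.sqrt (1 + T ^ 2) with hNTdef
  have hNT0 : 0 < NT := Real.sqrt_pos.2 (by positivity)
  have hnorm_lift : ‖lift1 nn‖ = h⁻¹ * NT := by
    rw [hlift, norm_smul, norm_inv, Real.norm_eq_abs, abs_of_pos hhpos, hznormval]
  have hufinal : ‖lift1 nn‖⁻¹ • lift1 nn = NT⁻¹ • z T := by
    rw [hnorm_lift, hlift, smul_smul]
    congr 1
    field_simp [hhpos.ne', hNT0.ne']
  have hraymem : (NT⁻¹ * V⁻¹) • lift1 y ∈ ray (lift1 y) := ⟨NT⁻¹ * V⁻¹, by positivity, rfl⟩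
  have hdistval : dist (NT⁻¹ • z T) ((NT⁻¹ * V⁻¹) • lift1 y) = T / NT := by
    rw [dist_eq_norm]
    have h1 : (NT⁻¹ * V⁻¹) • lift1 y = NT⁻¹ • vh := by rw [hvhdef, smul_smul]
    rw [h1, ← smul_sub]
    have h2 : z T - vh = T • ν := by
      rw [hzdef]
      show vh + T • ν - vh = T • ν
      abel
    rw [h2, norm_smul, norm_smul, hνnorm, mul_one, norm_inv, Real.norm_eq_abs, Real.norm_eq_abs,
      abs_of_pos hNT0, abs_of_nonneg hT0]
    rw [div_eq_inv_mul]
  calc infDist (‖lift1 nn‖⁻¹ • lift1 nn) (ray (lift1 y))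
      ≤ dist (NT⁻¹ • z T) ((NT⁻¹ * V⁻¹) • lift1 y) := by
        rw [hufinal]; exact infDist_le_dist_of_mem hraymem
    _ = T / NT := hdistval
    _ ≤ δ := by
        rw [div_le_iff₀ hNT0]
        exact hSbound T hTS
end
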